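/- Let n be a positive integer and δ ∈ [0, 1/2]. If A ⊂ ℝⁿ is measurable with λ(A) = 1, B ⊂ ℝⁿ is measurable with 0 < λ(B) < ∞, and Θ ⊂ A × B is measurable with λ(Θ) ≥ (1 − δ)·λ(A)·λ(B), then λ(A +_Θ B)^{2/n} ≥ 1 − 3δ/n. -/

import Mathlib

open MeasureTheory
open scoped ENNReal

/-- The restricted (to `Θ`) Minkowski sum `A +_Θ B = { x + y : (x, y) ∈ Θ }`. -/
def restrictedSum {n : ℕ} (Θ : Set (EuclideanSpace ℝ (Fin n) × EuclideanSpace ℝ (Fin n))) :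
    Set (EuclideanSpace ℝ (Fin n)) :=
  (fun p => p.1 + p.2) '' Θ

/-- Real inequality: `(1-δ)^{2/n} ≥ 1 - 3δ/n` for `δ ∈ [0,1/2]`, `n ≥ 1`. -/
lemma aux_real_ineq (n : ℕ) (hn : 0 < n) (δ : ℝ) (h0 : 0 ≤ δ) (h2 : δ ≤ 1 / 2) :
    1 - 3 * δ / n ≤ (1 - δ) ^ ((2 : ℝ) / n) := by
  have hnR : (1 : ℝ) ≤ (n : ℝ) := by exact_mod_cast hn
  rcases eq_or_lt_of_le (show 1 ≤ n from hn) with h1 | h2n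
  · -- n = 1
    have : n = 1 := h1.symm
    subst this
    have : ((2 : ℝ) / (1 : ℕ)) = ((2 : ℕ) : ℝ) := by norm_num
    rw [this, Real.rpow_natCast]
    push_cast
    nlinarith
  · -- n ≥ 2
    have hn2 : (2 : ℝ) ≤ (n : ℝ) := by exact_mod_cast h2n
    set t : ℝ := 2 / n with ht
    have ht0 : 0 < t := by positivity
    have ht1 : t ≤ 1 := by
      rw [ht, div_le_one (by linarith)]; exact hn2
    -- chord bound from concavity of x ^ t on [1/2, 1]
    have hconc := Real.concaveOn_rpow ht0.le ht1
    have hcomb := hconc.2 (show (1/2:ℝ) ∈ Set.Ici (0:ℝ) by norm_num)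
      (show (1:ℝ) ∈ Set.Ici (0:ℝ) by norm_num)
      (show (0:ℝ) ≤ 2 * δ by linarith) (show (0:ℝ) ≤ 1 - 2 * δ by linarith)
      (show 2 * δ + (1 - 2 * δ) = 1 by ring)
    have hx : (2 * δ) • (1 / 2 : ℝ) + (1 - 2 * δ) • (1 : ℝ) = 1 - δ := by
      simp [smul_eq_mul]; ring
    rw [hx] at hcomb
    simp only [smul_eq_mul, Real.one_rpow] at hcomb
    -- bound (1/2)^t ≥ 1 - 3/(2n)
    have hhalf : 1 - 3 / (2 * (n : ℝ)) ≤ (1 / 2 : ℝ) ^ t := by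
      have hlog : (1 / 2 : ℝ) ^ t = Real.exp (Real.log (1 / 2) * t) :=
        Real.rpow_def_of_pos (by norm_num) t
      rw [hlog]
      have hexp := Real.add_one_le_exp (Real.log (1 / 2) * t)
      have hlog2 : Real.log (1 / 2) = -Real.log 2 := by
        rw [one_div, Real.log_inv]
      have hl2 : Real.log 2 ≤ 0.75 := by
        have := Real.log_two_lt_d9
        linarith
      have hl2' : 0 ≤ Real.log 2 := Real.log_nonneg (by norm_num)
      have hnpos : (0:ℝ) < n := by linarith
      have hkey : Real.log 2 * t ≤ 3 / (2 * (n : ℝ)) := by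
        rw [ht]
        rw [show Real.log 2 * (2 / (n:ℝ)) = (2 * Real.log 2) / n by ring,
          show (3 : ℝ) / (2 * (n:ℝ)) = (3 / 2) / n by ring]
        gcongr
        linarith
      have hstep : 1 - 3 / (2 * (n : ℝ)) ≤ Real.log (1 / 2) * t + 1 := by
        rw [hlog2]
        nlinarith [hkey]
      linarith
    have hmain : 1 - 3 * δ / n ≤ 2 * δ * (1 / 2 : ℝ) ^ t + (1 - 2 * δ) := by
      have hnpos : (0:ℝ) < n := by linarith
      have h1 : 2 * δ * (1 - 3 / (2 * (n : ℝ))) ≤ 2 * δ * (1 / 2 : ℝ) ^ t :=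
        mul_le_mul_of_nonneg_left hhalf (by linarith)
      have h2' : 2 * δ * (1 - 3 / (2 * (n : ℝ))) = 2 * δ - 3 * δ / n := by
        field_simp
      linarith
    linarith

theorem restrictedSum_small_ratio_bound (n : ℕ) (hn : 0 < n)
    (δ : ℝ) (hδ : δ ∈ Set.Icc (0 : ℝ) (1 / 2))
    (A B : Set (EuclideanSpace ℝ (Fin n)))
    (hA : MeasurableSet A) (hB : MeasurableSet B)
    (hAvol : volume A = 1) (hB0 : 0 < volume B) (hB1 : volume B < ⊤)
    (Θ : Set (EuclideanSpace ℝ (Fin n) × EuclideanSpace ℝ (Fin n)))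
    (hΘm : MeasurableSet Θ) (hΘ : Θ ⊆ A ×ˢ B)
    (hΘvol : ENNReal.ofReal (1 - δ) * (volume A * volume B) ≤ volume Θ) :
    ENNReal.ofReal (1 - 3 * δ / n) ≤ volume (restrictedSum Θ) ^ ((2 : ℝ) / n) := by
  obtain ⟨hδ0, hδ2⟩ := hδ
  set c : ENNReal := ENNReal.ofReal (1 - δ) with hc
  have hc_top : c ≠ ⊤ := ENNReal.ofReal_ne_top
  -- slice function
  set f : EuclideanSpace ℝ (Fin n) → ℝ≥0∞ :=
    fun y => volume ((fun x => (x, y)) ⁻¹' Θ) with hf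
  have hfubini : volume Θ = ∫⁻ y, f y := by
    rw [Measure.volume_eq_prod, Measure.prod_apply_symm hΘm]
  have hf_le : ∀ y, f y ≤ 1 := by
    intro y
    calc f y ≤ volume A := by
          apply measure_mono
          intro x hx
          exact (hΘ hx).1
      _ = 1 := hAvol
  have hf_zero : ∀ y, y ∉ B → f y = 0 := by
    intro y hy
    have : (fun x => (x, y)) ⁻¹' Θ = ∅ := by
      ext x; simp only [Set.mem_preimage, Set.mem_empty_iff_false, iff_false]
      intro hx; exact hy (hΘ hx).2
    rw [hf]; simp [this]
  -- find a good slice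
  have hexists : ∃ y, c ≤ f y := by
    by_contra hcon
    push_neg at hcon
    set g : EuclideanSpace ℝ (Fin n) → ℝ≥0∞ := B.indicator (fun _ => c) with hg
    have hfi : ∫⁻ y, f y ≠ ⊤ := by
      rw [← hfubini]
      have : volume Θ ≤ volume (A ×ˢ B) := measure_mono hΘ
      rw [Measure.volume_eq_prod, Measure.prod_prod, hAvol, one_mul] at this
      exact (lt_of_le_of_lt this hB1).ne
    have h_le : f ≤ᵐ[volume] g := by
      apply Filter.Eventually.of_forall
      intro y
      by_cases hy : y ∈ B
      · rw [hg, Set.indicator_of_mem hy]; exact (hcon y).le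
      · rw [hf_zero y hy, hg, Set.indicator_of_notMem hy]
    have hlt : ∫⁻ y, f y < ∫⁻ y, g y := by
      refine lintegral_strict_mono_of_ae_le_of_ae_lt_on
        ((measurable_const.indicator hB).aemeasurable) hfi h_le (s := B) hB0.ne' ?_
      apply Filter.Eventually.of_forall
      intro y hy
      rw [hg, Set.indicator_of_mem hy]
      exact hcon y
    have hgval : ∫⁻ y, g y = c * volume B := by
      rw [hg, lintegral_indicator hB, setLIntegral_const]
    rw [← hfubini, hgval] at hlt
    rw [hAvol, one_mul] at hΘvol
    exact absurd hΘvol (not_le.mpr hlt)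
  obtain ⟨y, hy⟩ := hexists
  -- translated slice is inside the restricted sum
  have himg : (fun x => x + y) '' ((fun x => (x, y)) ⁻¹' Θ) ⊆ restrictedSum Θ := by
    rintro z ⟨x, hx, rfl⟩
    exact ⟨(x, y), hx, rfl⟩
  have htrans : volume ((fun x => x + y) '' ((fun x => (x, y)) ⁻¹' Θ)) = f y := by
    have heq : (fun x => x + y) '' ((fun x => (x, y)) ⁻¹' Θ)
        = (fun z => z + (-y)) ⁻¹' ((fun x => (x, y)) ⁻¹' Θ) := by
      ext z
      simp only [Set.mem_image, Set.mem_preimage]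
      constructor
      · rintro ⟨x, hx, rfl⟩; simpa using hx
      · intro hz; exact ⟨z + (-y), hz, by abel⟩
    rw [heq, measure_preimage_add_right]
  have hvol : c ≤ volume (restrictedSum Θ) := by
    calc c ≤ f y := hy
      _ = volume ((fun x => x + y) '' ((fun x => (x, y)) ⁻¹' Θ)) := htrans.symm
      _ ≤ volume (restrictedSum Θ) := measure_mono himg
  -- conclude with the real inequality
  have hpos : (0:ℝ) < 1 - δ := by linarith
  calc ENNReal.ofReal (1 - 3 * δ / n)
      ≤ ENNReal.ofReal ((1 - δ) ^ ((2:ℝ)/n)) :=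
        ENNReal.ofReal_le_ofReal (aux_real_ineq n hn δ hδ0 hδ2)
    _ = c ^ ((2:ℝ)/n) := by rw [hc, ENNReal.ofReal_rpow_of_pos hpos]
    _ ≤ volume (restrictedSum Θ) ^ ((2:ℝ)/n) :=
        ENNReal.rpow_le_rpow hvol (by positivity)
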